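/- Database-focused likelihood ratio: with database D = {x_1,...,x_n} ⊆ X, evidence E_D = {Γ_{x_1}=...=Γ_{x_k}=1, Γ_{x_{k+1}}=...=Γ_{x_n}=0}, Γ_x i.i.d. Bernoulli(p) given innocence configurations, and α_i = P(C=x_i | Γ_C=1), one has P(E_D | C∈D, Γ_C=1) / P(E_D | C∉D, Γ_C=1) = (α_1+...+α_k) / (p(α_1+...+α_n)), and the posterior odds are P(C∈D | E_D, Γ_C=1)/P(C∉D | E_D, Γ_C=1) = (α_1+...+α_k)/(p(α_{n+1}+...+α_{N+1})). -/

import Mathlib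

open MeasureTheory ProbabilityTheory
open scoped ENNReal

/-- Database-focused likelihood ratio and posterior odds: with a database consisting of
the first `n` individuals, whose observed `Γ`-statuses are: the first `k` bear `Γ` and
the others do not, the likelihood ratio of the database evidence in favour of `C ∈ D`
is `(α_1+⋯+α_k)/(p (α_1+⋯+α_n))`, and the posterior odds are
`(α_1+⋯+α_k)/(p (α_{n+1}+⋯+α_{N+1}))`. -/
theorem island_database_focused
    {Ω : Type*} [MeasurableSpace Ω] (μ : Measure Ω) [IsProbabilityMeasure μ]
    (N : ℕ) (C : Ω → Fin (N + 1)) (hC : Measurable C)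
    (Γ : Fin (N + 1) → Ω → Bool) (hΓ : ∀ x, Measurable (Γ x))
    (p : ℝ≥0∞) (hp0 : p ≠ 0) (hp1 : p < 1)
    (hiid : iIndepFun Γ μ)
    (hBer : ∀ x, μ {ω | Γ x ω = true} = p)
    (hind : IndepFun C (fun ω x => Γ x ω) μ)
    (n k : ℕ) (hkn : k ≤ n) (hn : n ≤ N + 1)
    (α : Fin (N + 1) → ℝ≥0∞)
    (hα : ∀ i, α i = μ[|{ω | Γ (C ω) ω = true}] {ω | C ω = i})
    (hαpos : ∀ i, α i ≠ 0)
    -- the database evidence: among the database members, exactly the first `k` bear `Γ`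
    (ED : Set Ω)
    (hED : ED = {ω | ∀ i : Fin (N + 1), (i : ℕ) < n → (Γ i ω = true ↔ (i : ℕ) < k)})
    (hpos1 : μ ({ω | (C ω : ℕ) < n} ∩ {ω | Γ (C ω) ω = true}) ≠ 0)
    (hpos2 : μ ({ω | ¬ (C ω : ℕ) < n} ∩ {ω | Γ (C ω) ω = true}) ≠ 0)
    (hpos3 : μ (ED ∩ {ω | Γ (C ω) ω = true}) ≠ 0) :
    μ[|{ω | (C ω : ℕ) < n} ∩ {ω | Γ (C ω) ω = true}] ED
        / μ[|{ω | ¬ (C ω : ℕ) < n} ∩ {ω | Γ (C ω) ω = true}] ED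
      = (∑ i ∈ Finset.univ.filter (fun i : Fin (N + 1) => (i : ℕ) < k), α i)
        / (p * ∑ i ∈ Finset.univ.filter (fun i : Fin (N + 1) => (i : ℕ) < n), α i) ∧
    μ[|ED ∩ {ω | Γ (C ω) ω = true}] {ω | (C ω : ℕ) < n}
        / μ[|ED ∩ {ω | Γ (C ω) ω = true}] {ω | ¬ (C ω : ℕ) < n}
      = (∑ i ∈ Finset.univ.filter (fun i : Fin (N + 1) => (i : ℕ) < k), α i)
        / (p * ∑ i ∈ Finset.univ.filter (fun i : Fin (N + 1) => ¬ (i : ℕ) < n), α i) := by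
  classical
  have hp_top : p ≠ ∞ := (hp1.trans_le le_top).ne
  have h1p0 : (1 : ℝ≥0∞) - p ≠ 0 := by
    simp only [ne_eq, tsub_eq_zero_iff_le, not_le]
    exact hp1
  -- basic notation
  set G : Set Ω := {ω | Γ (C ω) ω = true} with hGdef
  -- measurability
  have hCset : ∀ i : Fin (N + 1), MeasurableSet {ω | C ω = i} :=
    fun i => hC (measurableSet_singleton i)
  have hΓset : ∀ i : Fin (N + 1), MeasurableSet {ω | Γ i ω = true} :=
    fun i => hΓ i (measurableSet_singleton true)
  have hGmeas : MeasurableSet G := by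
    have hGu : G = ⋃ i : Fin (N + 1), ({ω | C ω = i} ∩ {ω | Γ i ω = true}) := by
      ext ω
      simp only [hGdef, Set.mem_iUnion, Set.mem_inter_iff, Set.mem_setOf_eq]
      constructor
      · intro h; exact ⟨C ω, rfl, h⟩
      · rintro ⟨i, hi, h⟩; rwa [hi]
    rw [hGu]
    exact MeasurableSet.iUnion fun i => (hCset i).inter (hΓset i)
  -- the Γ-vector
  set T : Ω → (Fin (N + 1) → Bool) := fun ω x => Γ x ω with hTdef
  have hBmeas : ∀ B : Set (Fin (N + 1) → Bool), MeasurableSet B :=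
    fun B => (Set.to_countable B).measurableSet
  have hTmeas : Measurable T := measurable_pi_lambda _ fun x => hΓ x
  have hCT : ∀ (i : Fin (N + 1)) (B : Set (Fin (N + 1) → Bool)),
      μ ({ω | C ω = i} ∩ T ⁻¹' B) = μ {ω | C ω = i} * μ (T ⁻¹' B) := by
    intro i B
    exact hind.measure_inter_preimage_eq_mul {i} B (measurableSet_singleton i) (hBmeas B)
  -- preimage descriptions
  have hΓpre : ∀ i : Fin (N + 1), {ω | Γ i ω = true} = T ⁻¹' {f | f i = true} := fun i => rfl
  have hEDT : ED = T ⁻¹' {f | ∀ i : Fin (N + 1), (i : ℕ) < n → (f i = true ↔ (i : ℕ) < k)} := by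
    rw [hED]; rfl
  have hEDmeas : MeasurableSet ED := by rw [hEDT]; exact hTmeas (hBmeas _)
  -- iid computations
  set s : Finset (Fin (N + 1)) := Finset.univ.filter (fun i => (i : ℕ) < n) with hsdef
  have hboolset : ∀ (i : Fin (N + 1)) (P : Prop) [Decidable P],
      (Γ i) ⁻¹' {b | b = decide P} = {ω | Γ i ω = true ↔ P} := by
    intro i P _
    ext ω
    simp only [Set.mem_preimage, Set.mem_setOf_eq]
    by_cases h : P <;> simp [h]
  have hEDint : ED = ⋂ i ∈ s, (Γ i) ⁻¹' {b | b = decide ((i : ℕ) < k)} := by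
    rw [hED]
    ext ω
    simp only [Set.mem_setOf_eq, Set.mem_iInter, hsdef, Finset.mem_filter, Finset.mem_univ,
      true_and]
    constructor
    · intro h i hi
      have := h i hi
      simp only [Set.mem_preimage, Set.mem_setOf_eq]
      by_cases hk : (i : ℕ) < k <;> simp [hk] at this ⊢ <;> simp [this]
    · intro h i hi
      have := h i hi
      simp only [Set.mem_preimage, Set.mem_setOf_eq] at this
      by_cases hk : (i : ℕ) < k <;> simp [hk] at this ⊢ <;> simp [this]
  set r : Fin (N + 1) → ℝ≥0∞ := fun i => if (i : ℕ) < k then p else 1 - p with hrdef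
  have hfalse : ∀ i : Fin (N + 1), μ {ω | Γ i ω = false} = 1 - p := by
    intro i
    have hcompl : {ω | Γ i ω = false} = {ω | Γ i ω = true}ᶜ := by
      ext ω; simp
    rw [hcompl, prob_compl_eq_one_sub (hΓset i), hBer i]
  have hEr : ∀ i : Fin (N + 1), μ ((Γ i) ⁻¹' {b | b = decide ((i : ℕ) < k)}) = r i := by
    intro i
    by_cases hk : (i : ℕ) < k
    · have : (Γ i) ⁻¹' {b | b = decide ((i : ℕ) < k)} = {ω | Γ i ω = true} := by
        ext ω; simp [hk]
      rw [this, hBer i, hrdef]; simp [hk]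
    · have : (Γ i) ⁻¹' {b | b = decide ((i : ℕ) < k)} = {ω | Γ i ω = false} := by
        ext ω; simp [hk]
      rw [this, hfalse i, hrdef]; simp [hk]
  set q : ℝ≥0∞ := ∏ i ∈ s, r i with hqdef
  have hEDq : μ ED = q := by
    rw [hEDint, hiid.measure_inter_preimage_eq_mul s (fun i _ => (Set.to_countable _).measurableSet)]
    exact Finset.prod_congr rfl fun i _ => hEr i
  have hq0 : q ≠ 0 := by
    rw [hqdef]
    rw [Finset.prod_ne_zero_iff]
    intro i _
    rw [hrdef]
    by_cases hk : (i : ℕ) < k <;> simp [hk, hp0, h1p0]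
  have hq_top : q ≠ ∞ := by rw [← hEDq]; exact measure_ne_top μ ED
  -- μ (ED ∩ {Γ i = true}) = q * p for i outside the database
  have hEDi : ∀ i : Fin (N + 1), ¬ (i : ℕ) < n → μ (ED ∩ {ω | Γ i ω = true}) = q * p := by
    intro i hi
    have hins : i ∉ s := by simp [hsdef, hi]
    set E' : Fin (N + 1) → Set Bool :=
      fun j => if j = i then {b | b = true} else {b | b = decide ((j : ℕ) < k)} with hE'def
    have h1 := hiid.measure_inter_preimage_eq_mul (insert i s)
      (sets := E') (fun j _ => (Set.to_countable _).measurableSet)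
    rw [Finset.set_biInter_insert, Finset.prod_insert hins] at h1
    have h2 : (⋂ j ∈ s, (Γ j) ⁻¹' E' j) = ED := by
      rw [hEDint]
      exact Set.iInter₂_congr fun j hj => by
        rw [hE'def]; simp only
        rw [if_neg (fun h : _ = i => hins (by rw [← h]; exact hj))]
    have h3 : ∏ j ∈ s, μ ((Γ j) ⁻¹' E' j) = q := by
      refine Finset.prod_congr rfl fun j hj => ?_
      rw [hE'def]; simp only
      rw [if_neg (fun h : _ = i => hins (by rw [← h]; exact hj))]
      exact hEr j
    have h4 : (Γ i) ⁻¹' E' i = {ω | Γ i ω = true} := by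
      rw [hE'def]; simp only [if_pos rfl]; rfl
    rw [h2, h3, h4] at h1
    rw [Set.inter_comm, h1, hBer i, mul_comm]
  -- decomposition over the value of C
  have hdecomp : ∀ S : Set Ω, MeasurableSet S →
      μ S = ∑ i : Fin (N + 1), μ ({ω | C ω = i} ∩ S) := by
    intro S hS
    have hU : S = ⋃ i : Fin (N + 1), ({ω | C ω = i} ∩ S) := by
      ext ω
      simp only [Set.mem_iUnion, Set.mem_inter_iff, Set.mem_setOf_eq]
      exact ⟨fun h => ⟨C ω, rfl, h⟩, fun ⟨i, _, h⟩ => h⟩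
    have hdisj : Pairwise (Function.onFun Disjoint fun i : Fin (N + 1) =>
        {ω | C ω = i} ∩ S) := by
      intro i j hij
      simp only [Function.onFun, Set.disjoint_left]
      rintro ω ⟨h1, _⟩ ⟨h2, _⟩
      exact hij (h1 ▸ h2 ▸ rfl)
    conv_lhs => rw [hU]
    rw [measure_iUnion hdisj fun i => (hCset i).inter hS, tsum_fintype]
  -- basic facts about G and α
  have hg0 : μ G ≠ 0 := fun h => hpos1 (measure_mono_null Set.inter_subset_right h)
  have hg_top : μ G ≠ ∞ := measure_ne_top μ G
  have halpha : ∀ i : Fin (N + 1), μ ({ω | C ω = i} ∩ G) = α i * μ G := by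
    intro i
    rw [hα i, cond_apply hGmeas μ, Set.inter_comm G]
    rw [mul_comm ((μ G)⁻¹) _, mul_assoc, ENNReal.inv_mul_cancel hg0 hg_top, mul_one]
  have hatop : ∀ i : Fin (N + 1), α i ≠ ∞ := by
    intro i h
    have := halpha i
    rw [h] at this
    rw [ENNReal.top_mul hg0] at this
    exact (measure_ne_top μ _) this
  have hCGi : ∀ i : Fin (N + 1), {ω | C ω = i} ∩ G = {ω | C ω = i} ∩ {ω | Γ i ω = true} := by
    intro i
    ext ω
    simp only [hGdef, Set.mem_inter_iff, Set.mem_setOf_eq]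
    constructor
    · rintro ⟨h1, h2⟩; refine ⟨h1, ?_⟩; rwa [h1] at h2
    · rintro ⟨h1, h2⟩; refine ⟨h1, ?_⟩; rw [h1]; exact h2
  have hcp : ∀ i : Fin (N + 1), μ {ω | C ω = i} * p = α i * μ G := by
    intro i
    rw [← halpha i, hCGi i, hΓpre i, hCT i, ← hΓpre i, hBer i]
  have hc : ∀ i : Fin (N + 1), μ {ω | C ω = i} = α i * μ G * p⁻¹ := by
    intro i
    rw [← hcp i, mul_assoc, ENNReal.mul_inv_cancel hp0 hp_top, mul_one]

  -- measurability of the C-events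
  have hAn : MeasurableSet {ω | (C ω : ℕ) < n} := by
    have : {ω | (C ω : ℕ) < n} = C ⁻¹' {i : Fin (N + 1) | (i : ℕ) < n} := rfl
    rw [this]; exact hC (Set.to_countable _).measurableSet
  have hBn : MeasurableSet {ω | ¬ (C ω : ℕ) < n} := by
    have : {ω | ¬ (C ω : ℕ) < n} = C ⁻¹' {i : Fin (N + 1) | ¬ (i : ℕ) < n} := rfl
    rw [this]; exact hC (Set.to_countable _).measurableSet
  -- term computations
  have t1 : ∀ i : Fin (N + 1), μ ({ω | C ω = i} ∩ ({ω | (C ω : ℕ) < n} ∩ G))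
      = if (i : ℕ) < n then α i * μ G else 0 := by
    intro i
    by_cases hin : (i : ℕ) < n
    · rw [if_pos hin, ← halpha i]
      congr 1
      ext ω
      simp only [Set.mem_inter_iff, Set.mem_setOf_eq]
      constructor
      · rintro ⟨h1, _, h2⟩; exact ⟨h1, h2⟩
      · rintro ⟨h1, h2⟩; exact ⟨h1, by rw [h1]; exact hin, h2⟩
    · rw [if_neg hin]
      have : {ω | C ω = i} ∩ ({ω | (C ω : ℕ) < n} ∩ G) = ∅ := by
        ext ω
        simp only [Set.mem_inter_iff, Set.mem_setOf_eq, Set.mem_empty_iff_false, iff_false,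
          not_and]
        intro h1 h2
        rw [h1] at h2
        exact absurd h2 hin
      rw [this, measure_empty]
  have t2 : ∀ i : Fin (N + 1), μ ({ω | C ω = i} ∩ ({ω | ¬ (C ω : ℕ) < n} ∩ G))
      = if ¬ (i : ℕ) < n then α i * μ G else 0 := by
    intro i
    by_cases hin : (i : ℕ) < n
    · rw [if_neg (not_not.mpr hin)]
      have : {ω | C ω = i} ∩ ({ω | ¬ (C ω : ℕ) < n} ∩ G) = ∅ := by
        ext ω
        simp only [Set.mem_inter_iff, Set.mem_setOf_eq, Set.mem_empty_iff_false, iff_false,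
          not_and]
        intro h1 h2
        rw [h1] at h2
        exact absurd hin h2
      rw [this, measure_empty]
    · rw [if_pos hin, ← halpha i]
      congr 1
      ext ω
      simp only [Set.mem_inter_iff, Set.mem_setOf_eq]
      constructor
      · rintro ⟨h1, _, h2⟩; exact ⟨h1, h2⟩
      · rintro ⟨h1, h2⟩; exact ⟨h1, by rw [h1]; exact hin, h2⟩
  have t3 : ∀ i : Fin (N + 1), μ ({ω | C ω = i} ∩ (({ω | (C ω : ℕ) < n} ∩ G) ∩ ED))
      = if (i : ℕ) < k then α i * (μ G * p⁻¹ * q) else 0 := by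
    intro i
    by_cases hik : (i : ℕ) < k
    · rw [if_pos hik]
      have hin : (i : ℕ) < n := lt_of_lt_of_le hik hkn
      have hset : {ω | C ω = i} ∩ (({ω | (C ω : ℕ) < n} ∩ G) ∩ ED) = {ω | C ω = i} ∩ ED := by
        ext ω
        simp only [Set.mem_inter_iff, Set.mem_setOf_eq]
        constructor
        · rintro ⟨h1, _, h2⟩; exact ⟨h1, h2⟩
        · rintro ⟨h1, h2⟩
          refine ⟨h1, ⟨by rw [h1]; exact hin, ?_⟩, h2⟩
          rw [hED] at h2
          have := (h2 i hin).mpr hik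
          show Γ (C ω) ω = true
          rw [h1]; exact this
      rw [hset, hEDT, hCT i, ← hEDT, hEDq, hc i]; ring
    · rw [if_neg hik]
      have hset : {ω | C ω = i} ∩ (({ω | (C ω : ℕ) < n} ∩ G) ∩ ED) = ∅ := by
        ext ω
        simp only [hGdef, Set.mem_inter_iff, Set.mem_setOf_eq, Set.mem_empty_iff_false,
          iff_false, not_and]
        rintro h1 ⟨hin, hGm⟩ hEDm
        rw [h1] at hin
        rw [hED] at hEDm
        have hGi : Γ i ω = true := by rw [h1] at hGm; exact hGm
        exact hik ((hEDm i hin).mp hGi)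
      rw [hset, measure_empty]
  have t4 : ∀ i : Fin (N + 1), μ ({ω | C ω = i} ∩ (({ω | ¬ (C ω : ℕ) < n} ∩ G) ∩ ED))
      = if ¬ (i : ℕ) < n then α i * (μ G * q) else 0 := by
    intro i
    by_cases hin : (i : ℕ) < n
    · rw [if_neg (not_not.mpr hin)]
      have hset : {ω | C ω = i} ∩ (({ω | ¬ (C ω : ℕ) < n} ∩ G) ∩ ED) = ∅ := by
        ext ω
        simp only [Set.mem_inter_iff, Set.mem_setOf_eq, Set.mem_empty_iff_false, iff_false,
          not_and]
        rintro h1 ⟨hn', _⟩ _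
        rw [h1] at hn'
        exact hn' hin
      rw [hset, measure_empty]
    · rw [if_pos hin]
      have hset : {ω | C ω = i} ∩ (({ω | ¬ (C ω : ℕ) < n} ∩ G) ∩ ED)
          = {ω | C ω = i} ∩ (ED ∩ {ω | Γ i ω = true}) := by
        ext ω
        simp only [hGdef, Set.mem_inter_iff, Set.mem_setOf_eq]
        constructor
        · rintro ⟨h1, ⟨_, hGm⟩, h2⟩
          refine ⟨h1, h2, ?_⟩
          rw [h1] at hGm; exact hGm
        · rintro ⟨h1, h2, h3⟩
          refine ⟨h1, ⟨by rw [h1]; exact hin, ?_⟩, h2⟩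
          show Γ (C ω) ω = true
          rw [h1]; exact h3
      have hpre : ED ∩ {ω | Γ i ω = true}
          = T ⁻¹' ({f | ∀ j : Fin (N + 1), (j : ℕ) < n → (f j = true ↔ (j : ℕ) < k)}
              ∩ {f | f i = true}) := by
        rw [hEDT]; rfl
      rw [hset, hpre, hCT i, ← hpre, hEDi i hin, hc i]
      rw [show α i * μ G * p⁻¹ * (q * p) = (p⁻¹ * p) * (α i * (μ G * q)) from by ring]
      rw [ENNReal.inv_mul_cancel hp0 hp_top, one_mul]
  -- the four measures
  have hm1 : μ ({ω | (C ω : ℕ) < n} ∩ G)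
      = (∑ i ∈ Finset.univ.filter (fun i : Fin (N + 1) => (i : ℕ) < n), α i) * μ G := by
    rw [hdecomp _ (hAn.inter hGmeas)]
    calc ∑ i : Fin (N + 1), μ ({ω | C ω = i} ∩ ({ω | (C ω : ℕ) < n} ∩ G))
        = ∑ i : Fin (N + 1), (if (i : ℕ) < n then α i * μ G else 0) :=
          Finset.sum_congr rfl fun i _ => t1 i
      _ = ∑ i ∈ Finset.univ.filter (fun i : Fin (N + 1) => (i : ℕ) < n), α i * μ G :=
          (Finset.sum_filter _ _).symm
      _ = (∑ i ∈ Finset.univ.filter (fun i : Fin (N + 1) => (i : ℕ) < n), α i) * μ G :=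
          (Finset.sum_mul _ _ _).symm
  have hm2 : μ ({ω | ¬ (C ω : ℕ) < n} ∩ G)
      = (∑ i ∈ Finset.univ.filter (fun i : Fin (N + 1) => ¬ (i : ℕ) < n), α i) * μ G := by
    rw [hdecomp _ (hBn.inter hGmeas)]
    calc ∑ i : Fin (N + 1), μ ({ω | C ω = i} ∩ ({ω | ¬ (C ω : ℕ) < n} ∩ G))
        = ∑ i : Fin (N + 1), (if ¬ (i : ℕ) < n then α i * μ G else 0) :=
          Finset.sum_congr rfl fun i _ => t2 i
      _ = ∑ i ∈ Finset.univ.filter (fun i : Fin (N + 1) => ¬ (i : ℕ) < n), α i * μ G :=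
          (Finset.sum_filter _ _).symm
      _ = (∑ i ∈ Finset.univ.filter (fun i : Fin (N + 1) => ¬ (i : ℕ) < n), α i) * μ G :=
          (Finset.sum_mul _ _ _).symm
  have hm3 : μ (({ω | (C ω : ℕ) < n} ∩ G) ∩ ED)
      = (∑ i ∈ Finset.univ.filter (fun i : Fin (N + 1) => (i : ℕ) < k), α i)
          * (μ G * p⁻¹ * q) := by
    rw [hdecomp _ ((hAn.inter hGmeas).inter hEDmeas)]
    calc ∑ i : Fin (N + 1), μ ({ω | C ω = i} ∩ (({ω | (C ω : ℕ) < n} ∩ G) ∩ ED))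
        = ∑ i : Fin (N + 1), (if (i : ℕ) < k then α i * (μ G * p⁻¹ * q) else 0) :=
          Finset.sum_congr rfl fun i _ => t3 i
      _ = ∑ i ∈ Finset.univ.filter (fun i : Fin (N + 1) => (i : ℕ) < k),
            α i * (μ G * p⁻¹ * q) := (Finset.sum_filter _ _).symm
      _ = (∑ i ∈ Finset.univ.filter (fun i : Fin (N + 1) => (i : ℕ) < k), α i)
            * (μ G * p⁻¹ * q) := (Finset.sum_mul _ _ _).symm
  have hm4 : μ (({ω | ¬ (C ω : ℕ) < n} ∩ G) ∩ ED)
      = (∑ i ∈ Finset.univ.filter (fun i : Fin (N + 1) => ¬ (i : ℕ) < n), α i)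
          * (μ G * q) := by
    rw [hdecomp _ ((hBn.inter hGmeas).inter hEDmeas)]
    calc ∑ i : Fin (N + 1), μ ({ω | C ω = i} ∩ (({ω | ¬ (C ω : ℕ) < n} ∩ G) ∩ ED))
        = ∑ i : Fin (N + 1), (if ¬ (i : ℕ) < n then α i * (μ G * q) else 0) :=
          Finset.sum_congr rfl fun i _ => t4 i
      _ = ∑ i ∈ Finset.univ.filter (fun i : Fin (N + 1) => ¬ (i : ℕ) < n),
            α i * (μ G * q) := (Finset.sum_filter _ _).symm
      _ = (∑ i ∈ Finset.univ.filter (fun i : Fin (N + 1) => ¬ (i : ℕ) < n), α i)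
            * (μ G * q) := (Finset.sum_mul _ _ _).symm
  -- abbreviations for the sums
  set S1 := ∑ i ∈ Finset.univ.filter (fun i : Fin (N + 1) => (i : ℕ) < k), α i with hS1def
  set Sn := ∑ i ∈ Finset.univ.filter (fun i : Fin (N + 1) => (i : ℕ) < n), α i with hSndef
  set Sc := ∑ i ∈ Finset.univ.filter (fun i : Fin (N + 1) => ¬ (i : ℕ) < n), α i with hScdef
  -- positivity facts
  have hSnG0 : Sn * μ G ≠ 0 := by rw [← hm1]; exact hpos1
  have hSn0 : Sn ≠ 0 := fun h => hSnG0 (by rw [h, zero_mul])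
  have hScG0 : Sc * μ G ≠ 0 := by rw [← hm2]; exact hpos2
  have hScG_top : Sc * μ G ≠ ∞ := by rw [← hm2]; exact measure_ne_top μ _
  constructor
  · rw [cond_apply (hAn.inter hGmeas) μ, cond_apply (hBn.inter hGmeas) μ, hm1, hm2, hm3, hm4]
    rw [show (Sc * μ G)⁻¹ * (Sc * (μ G * q)) = ((Sc * μ G)⁻¹ * (Sc * μ G)) * q from by ring,
      ENNReal.inv_mul_cancel hScG0 hScG_top, one_mul]
    rw [ENNReal.mul_inv (Or.inl hSn0) (Or.inr hg0)]
    rw [div_eq_mul_inv, div_eq_mul_inv, ENNReal.mul_inv (Or.inl hp0) (Or.inl hp_top)]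
    rw [show Sn⁻¹ * (μ G)⁻¹ * (S1 * (μ G * p⁻¹ * q)) * q⁻¹
        = ((μ G)⁻¹ * μ G) * ((q * q⁻¹) * (S1 * (p⁻¹ * Sn⁻¹))) from by ring]
    rw [ENNReal.inv_mul_cancel hg0 hg_top, ENNReal.mul_inv_cancel hq0 hq_top, one_mul, one_mul]
  · rw [cond_apply (hEDmeas.inter hGmeas) μ, cond_apply (hEDmeas.inter hGmeas) μ]
    have e1 : (ED ∩ G) ∩ {ω | (C ω : ℕ) < n} = ({ω | (C ω : ℕ) < n} ∩ G) ∩ ED := by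
      ext ω
      simp only [Set.mem_inter_iff]
      constructor <;> rintro ⟨⟨h1, h2⟩, h3⟩ <;> exact ⟨⟨h3, h2⟩, h1⟩
    have e2 : (ED ∩ G) ∩ {ω | ¬ (C ω : ℕ) < n} = ({ω | ¬ (C ω : ℕ) < n} ∩ G) ∩ ED := by
      ext ω
      simp only [Set.mem_inter_iff]
      constructor <;> rintro ⟨⟨h1, h2⟩, h3⟩ <;> exact ⟨⟨h3, h2⟩, h1⟩
    rw [e1, e2, hm3, hm4]
    rw [ENNReal.mul_div_mul_left (c := (μ (ED ∩ G))⁻¹) (S1 * (μ G * p⁻¹ * q)) (Sc * (μ G * q))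
      (ENNReal.inv_ne_zero.mpr (measure_ne_top μ _)) (ENNReal.inv_ne_top.mpr hpos3)]
    rw [show S1 * (μ G * p⁻¹ * q) = (μ G * q) * (S1 * p⁻¹) from by ring,
      show Sc * (μ G * q) = (μ G * q) * Sc from by ring,
      ENNReal.mul_div_mul_left (c := μ G * q) (S1 * p⁻¹) Sc
        (mul_ne_zero hg0 hq0) (ENNReal.mul_ne_top hg_top hq_top)]
    rw [div_eq_mul_inv, div_eq_mul_inv, ENNReal.mul_inv (Or.inl hp0) (Or.inl hp_top),
      ← mul_assoc]
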